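/- Let A_0, …, A_{l−1} be real m×m matrices with A_iᵀ = −A_i for all i, let ε > 0, and suppose ‖A_i‖ ≤ C for all i, where ‖·‖ is the ℓ2 operator norm. Then for every x ∈ ℝ^m, ‖x‖ ≤ ‖(I + ε A_{l−1})···(I + ε A_0)·x‖ ≤ (1 + ε²·C²)^{l/2}·‖x‖. In particular, the product of layer Jacobians neither decays nor grows exponentially in the depth l when ε² C² l is bounded. -/

import Mathlib

open RealInnerProductSpace


open Matrix

/-- The ℓ2 operator norm of a real square matrix. -/
noncomputable def l2OpNorm {m : Type*} [Fintype m] [DecidableEq m]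
    (M : Matrix m m ℝ) : ℝ :=
  ‖Matrix.toEuclideanCLM (𝕜 := ℝ) M‖

lemma single_step {m : ℕ} {ε C : ℝ} (hε : 0 < ε) (A : Matrix (Fin m) (Fin m) ℝ)
    (hanti : Aᵀ = -A) (hC : l2OpNorm A ≤ C) (x : EuclideanSpace ℝ (Fin m)) :
    ‖x‖ ≤ ‖Matrix.toEuclideanCLM (𝕜 := ℝ) (1 + ε • A) x‖ ∧
    ‖Matrix.toEuclideanCLM (𝕜 := ℝ) (1 + ε • A) x‖ ≤ Real.sqrt (1 + ε ^ 2 * C ^ 2) * ‖x‖ := by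
  set T := Matrix.toEuclideanCLM (𝕜 := ℝ) A with hT
  have happ : Matrix.toEuclideanCLM (𝕜 := ℝ) (1 + ε • A) x = x + ε • T x := by
    simp [map_add, _root_.map_smul, hT]
  have hinner : (inner ℝ x (T x) : ℝ) = 0 := by
    have hadj : ContinuousLinearMap.adjoint T = -T := by
      rw [hT, ← ContinuousLinearMap.star_eq_adjoint, ← map_star]
      have : star A = -A := by
        simpa [Matrix.star_eq_conjTranspose] using hanti
      rw [this, map_neg]
    have h1 : (inner ℝ x (T x) : ℝ) = (inner ℝ (ContinuousLinearMap.adjoint T x) x : ℝ) := by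
      rw [ContinuousLinearMap.adjoint_inner_left]
    have h2 : (inner ℝ x (T x) : ℝ) = (inner ℝ (T x) x : ℝ) := real_inner_comm _ _
    rw [hadj] at h1
    simp only [ContinuousLinearMap.neg_apply, inner_neg_left] at h1
    linarith [h1, h2]
  have hsq : ‖x + ε • T x‖ ^ 2 = ‖x‖ ^ 2 + ε ^ 2 * ‖T x‖ ^ 2 := by
    rw [norm_add_sq_real]
    rw [inner_smul_right, hinner, norm_smul]
    simp [mul_pow, abs_of_pos hε]
  have hC0 : 0 ≤ C := le_trans (norm_nonneg T) hC
  have hTx : ‖T x‖ ≤ C * ‖x‖ :=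
    le_trans (T.le_opNorm x) (by gcongr; exact hC)
  constructor
  · rw [happ]
    have : ‖x‖ ^ 2 ≤ ‖x + ε • T x‖ ^ 2 := by
      rw [hsq]; nlinarith [sq_nonneg (‖T x‖), sq_nonneg ε]
    nlinarith [this, norm_nonneg (x + ε • T x), norm_nonneg x]
  · rw [happ]
    have h2 : ‖x + ε • T x‖ ^ 2 ≤ (1 + ε ^ 2 * C ^ 2) * ‖x‖ ^ 2 := by
      rw [hsq]
      have hq : ‖T x‖ ^ 2 ≤ C ^ 2 * ‖x‖ ^ 2 := by
        have := mul_le_mul hTx hTx (norm_nonneg _) (by positivity)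
        nlinarith
      nlinarith [sq_nonneg ε, mul_le_mul_of_nonneg_left hq (sq_nonneg ε)]
    have hrhs : (Real.sqrt (1 + ε ^ 2 * C ^ 2) * ‖x‖) ^ 2 = (1 + ε ^ 2 * C ^ 2) * ‖x‖ ^ 2 := by
      rw [mul_pow, Real.sq_sqrt (by positivity)]
    have := h2.trans_eq hrhs.symm
    nlinarith [norm_nonneg (x + ε • T x), Real.sqrt_nonneg (1 + ε ^ 2 * C ^ 2), norm_nonneg x,
      mul_nonneg (Real.sqrt_nonneg (1 + ε ^ 2 * C ^ 2)) (norm_nonneg x)]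

lemma list_step {m : ℕ} {ε C : ℝ} (hε : 0 < ε)
    (L : List (Matrix (Fin m) (Fin m) ℝ))
    (h : ∀ B ∈ L, ∃ A' : Matrix (Fin m) (Fin m) ℝ,
        A'ᵀ = -A' ∧ l2OpNorm A' ≤ C ∧ B = 1 + ε • A')
    (x : EuclideanSpace ℝ (Fin m)) :
    ‖x‖ ≤ ‖Matrix.toEuclideanCLM (𝕜 := ℝ) L.prod x‖ ∧
    ‖Matrix.toEuclideanCLM (𝕜 := ℝ) L.prod x‖ ≤
      Real.sqrt (1 + ε ^ 2 * C ^ 2) ^ L.length * ‖x‖ := by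
  induction L generalizing x with
  | nil => simp
  | cons B L ih =>
    obtain ⟨A', hA1, hA2, hA3⟩ := h B (List.mem_cons_self)
    have ih' := ih (fun B hB => h B (List.mem_cons_of_mem _ hB)) x
    have happ : Matrix.toEuclideanCLM (𝕜 := ℝ) (B :: L).prod x
        = Matrix.toEuclideanCLM (𝕜 := ℝ) B (Matrix.toEuclideanCLM (𝕜 := ℝ) L.prod x) := by
      rw [List.prod_cons, _root_.map_mul]; rfl
    have hs := single_step hε A' hA1 hA2 (Matrix.toEuclideanCLM (𝕜 := ℝ) L.prod x)
    rw [← hA3] at hs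
    constructor
    · rw [happ]; exact le_trans ih'.1 hs.1
    · rw [happ]
      refine le_trans hs.2 ?_
      rw [List.length_cons, pow_succ]
      calc Real.sqrt (1 + ε ^ 2 * C ^ 2) * ‖Matrix.toEuclideanCLM (𝕜 := ℝ) L.prod x‖
          ≤ Real.sqrt (1 + ε ^ 2 * C ^ 2) * (Real.sqrt (1 + ε ^ 2 * C ^ 2) ^ L.length * ‖x‖) := by
            exact mul_le_mul_of_nonneg_left ih'.2 (Real.sqrt_nonneg _)
        _ = Real.sqrt (1 + ε ^ 2 * C ^ 2) ^ L.length * Real.sqrt (1 + ε ^ 2 * C ^ 2) * ‖x‖ := by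
            ring


/-- **No exponential growth or decay of products of Euler steps.**
If each `A_i` is antisymmetric with `‖A_i‖ ≤ C`, then for every `x`,
`‖x‖ ≤ ‖(I + ε A_{l-1}) ⋯ (I + ε A_0) x‖ ≤ (1 + ε² C²)^{l/2} ‖x‖`
(Euclidean norms; the factor of index `l-1` is leftmost). -/
theorem euler_product_no_exponential_growth_or_decay (m l : ℕ) (ε C : ℝ)
    (hε : 0 < ε) (A : ℕ → Matrix (Fin m) (Fin m) ℝ)
    (hanti : ∀ i < l, (A i)ᵀ = -A i)
    (hC : ∀ i < l, l2OpNorm (A i) ≤ C)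
    (x : EuclideanSpace ℝ (Fin m)) :
    ‖x‖ ≤ ‖Matrix.toEuclideanCLM (𝕜 := ℝ)
            (((List.range l).map fun i => (1 : Matrix (Fin m) (Fin m) ℝ)
                + ε • A (l - 1 - i)).prod) x‖ ∧
    ‖Matrix.toEuclideanCLM (𝕜 := ℝ)
        (((List.range l).map fun i => (1 : Matrix (Fin m) (Fin m) ℝ)
            + ε • A (l - 1 - i)).prod) x‖ ≤
      Real.sqrt (1 + ε ^ 2 * C ^ 2) ^ l * ‖x‖ := by
  have key := list_step (C := C) hε ((List.range l).map fun i => (1 : Matrix (Fin m) (Fin m) ℝ)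
      + ε • A (l - 1 - i)) ?_ x
  · simpa using key
  · intro B hB
    simp only [List.mem_map, List.mem_range] at hB
    obtain ⟨i, hi, rfl⟩ := hB
    have hlt : l - 1 - i < l := by omega
    exact ⟨A (l - 1 - i), hanti _ hlt, hC _ hlt, rfl⟩
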